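/- Suppose there exists a doubly even self-dual binary code of length n and minimum distance d ≥ 2. Then there exists a CSS stabilizer code on n−1 qubits, with X- and Z-stabilizer groups both generated by the dual C^⊥ of the punctured code, that is a valid stabilizer code (C^⊥ ⊆ C ensures commutativity of X-type and Z-type stabilizers), encodes exactly one logical qubit, and has minimum distance at least d−1. -/

import Mathlib

/-- The dual of a binary linear code under the standard F₂ inner product. -/
def dualCode {n : ℕ} (C : Submodule (ZMod 2) (Fin n → ZMod 2)) :
    Submodule (ZMod 2) (Fin n → ZMod 2) where
  carrier := {x | ∀ c ∈ C, ∑ i, x i * c i = 0}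
  add_mem' := by
    intro a b ha hb c hc
    simp only [Set.mem_setOf_eq, Pi.add_apply, add_mul, Finset.sum_add_distrib] at *
    rw [ha c hc, hb c hc, add_zero]
  zero_mem' := by intro c hc; simp
  smul_mem' := by
    intro r a ha c hc
    simp only [Set.mem_setOf_eq, Pi.smul_apply, smul_eq_mul, mul_assoc,
      ← Finset.mul_sum] at *
    rw [ha c hc, mul_zero]

/-- Puncturing at the last coordinate, as a linear map. -/
def punctureMap (n : ℕ) : (Fin (n + 1) → ZMod 2) →ₗ[ZMod 2] (Fin n → ZMod 2) :=
  LinearMap.funLeft (ZMod 2) (ZMod 2) Fin.castSucc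



open Finset in
private lemma hammingNorm_le_punctured {n : ℕ} (v : Fin (n + 1) → ZMod 2) :
    hammingNorm v ≤ hammingNorm (punctureMap n v) + 1 := by
  classical
  have h1 : hammingNorm v = ∑ i : Fin (n+1), if v i ≠ 0 then 1 else 0 := by
    simp [hammingNorm, Finset.card_filter]
  have h2 : hammingNorm (punctureMap n v)
      = ∑ i : Fin n, if v i.castSucc ≠ 0 then 1 else 0 := by
    simp only [hammingNorm, Finset.card_filter]
    exact Finset.sum_congr rfl fun i _ => by
      simp only [punctureMap, LinearMap.funLeft, LinearMap.coe_mk, AddHom.coe_mk, Function.comp_apply]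
      split_ifs <;> simp_all
  rw [h1, h2, Fin.sum_univ_castSucc]
  have : (if v (Fin.last n) ≠ 0 then 1 else 0) ≤ 1 := by split <;> simp
  omega

private lemma punctureMap_apply {n : ℕ} (v : Fin (n + 1) → ZMod 2) (i : Fin n) :
    punctureMap n v i = v i.castSucc := rfl

/-- CSS construction from a doubly even self-dual code: the dual of the punctured
code is contained in the punctured code (commuting X/Z stabilizers), the dimension
difference is one (one logical qubit), and the minimum weight of the punctured code
is at least d - 1. -/
theorem css_from_doublyEven_selfDual {n : ℕ} (d : ℕ) (hd : 2 ≤ d)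
    (Csd : Submodule (ZMod 2) (Fin (n + 1) → ZMod 2))
    (hsd : Csd = dualCode Csd)
    (hde : ∀ v ∈ Csd, 4 ∣ hammingNorm v)
    (hdist : ∀ c ∈ Csd, c ≠ 0 → d ≤ hammingNorm c) :
    dualCode (Csd.map (punctureMap n)) ≤ Csd.map (punctureMap n) ∧
      Module.finrank (ZMod 2) (Csd.map (punctureMap n)) =
        Module.finrank (ZMod 2) (dualCode (Csd.map (punctureMap n))) + 1 ∧
      (∀ c ∈ Csd.map (punctureMap n), c ≠ 0 → d - 1 ≤ hammingNorm c) := by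
  classical
  have hPapp : ∀ (v : Fin (n+1) → ZMod 2) (i : Fin n),
      punctureMap n v i = v i.castSucc := fun v i => rfl
  -- injectivity on Csd
  have hzero : ∀ v ∈ Csd, punctureMap n v = 0 → v = 0 := by
    intro v hv h0
    by_contra hne
    have h1 := hdist v hv hne
    have h2 := hammingNorm_le_punctured v
    rw [h0, hammingNorm_zero] at h2
    omega
  -- some codeword has last coordinate 1
  have hex : ∃ v ∈ Csd, v (Fin.last n) = 1 := by
    by_contra hno
    push_neg at hno
    have h01 : ∀ x : ZMod 2, x ≠ 1 → x = 0 := by decide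
    have hlast : ∀ v ∈ Csd, v (Fin.last n) = 0 := fun v hv => h01 _ (hno v hv)
    set e : Fin (n+1) → ZMod 2 := Pi.single (Fin.last n) 1 with he
    have heC : e ∈ Csd := by
      rw [hsd]
      intro c hc
      have : ∑ i, e i * c i = c (Fin.last n) := by
        simp [he, Pi.single_apply, Finset.sum_ite_eq']
      rw [this, hlast c hc]
    have hene : e ≠ 0 := by
      intro h
      have := congrFun h (Fin.last n)
      simp [he] at this
    have hnorm : hammingNorm e = 1 := by
      have hset : ({i | e i ≠ 0} : Finset (Fin (n+1))) = {Fin.last n} := by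
        ext i
        simp only [Finset.mem_filter, Finset.mem_univ, true_and,
          Finset.mem_singleton, he, Pi.single_apply]
        rcases eq_or_ne i (Fin.last n) with h | h <;> simp [h]
      rw [hammingNorm, hset, Finset.card_singleton]
    have := hdist e heC hene
    omega
  -- the last-coordinate projection
  set π : (Fin (n+1) → ZMod 2) →ₗ[ZMod 2] ZMod 2 := LinearMap.proj (Fin.last n) with hπ
  -- the dual of the punctured code is the punctured shortened code
  have hdualeq : dualCode (Csd.map (punctureMap n))
      = (Csd ⊓ LinearMap.ker π).map (punctureMap n) := by
    apply le_antisymm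
    · intro x hx
      set x' : Fin (n+1) → ZMod 2 := Fin.snoc x 0 with hx'
      have hc1 : ∀ i : Fin n, x' i.castSucc = x i := fun i => Fin.snoc_castSucc _ _ _
      have hc2 : x' (Fin.last n) = 0 := Fin.snoc_last _ _
      have hx'C : x' ∈ Csd := by
        rw [hsd]
        intro c hc
        have hs := hx (punctureMap n c) ⟨c, hc, rfl⟩
        rw [Fin.sum_univ_castSucc]
        simpa [hc1, hc2, hPapp] using hs
      refine ⟨x', ⟨hx'C, ?_⟩, ?_⟩
      · simpa [hπ] using hc2
      · funext i; rw [hPapp]; exact hc1 i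
    · rintro _ ⟨v, ⟨hvC, hvk⟩, rfl⟩ c ⟨w, hw, rfl⟩
      have hvlast : v (Fin.last n) = 0 := hvk
      rw [hsd] at hvC
      have hsum := hvC w hw
      rw [Fin.sum_univ_castSucc, hvlast, zero_mul, add_zero] at hsum
      simpa [hPapp] using hsum
  refine ⟨?_, ?_, ?_⟩
  · rw [hdualeq]
    exact Submodule.map_mono inf_le_left
  · -- dimensions
    set f : Csd →ₗ[ZMod 2] (Fin n → ZMod 2) := (punctureMap n).comp Csd.subtype with hf
    have hfinj : Function.Injective f := by
      rw [← LinearMap.ker_eq_bot]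
      apply LinearMap.ker_eq_bot'.mpr
      rintro ⟨v, hv⟩ h0
      exact Subtype.ext (hzero v hv h0)
    have hrangef : LinearMap.range f = Csd.map (punctureMap n) := by
      rw [hf, LinearMap.range_comp, Submodule.range_subtype]
    have hdim1 : Module.finrank (ZMod 2) (Csd.map (punctureMap n))
        = Module.finrank (ZMod 2) Csd := by
      rw [← hrangef]
      exact LinearMap.finrank_range_of_inj hfinj
    set g : Csd →ₗ[ZMod 2] ZMod 2 := π.comp Csd.subtype with hg
    obtain ⟨v, hvC, hv1⟩ := hex
    have hgsurj : Function.Surjective g := by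
      intro y
      refine ⟨y • ⟨v, hvC⟩, ?_⟩
      have : g ⟨v, hvC⟩ = 1 := by simpa [hg, hπ] using hv1
      rw [map_smul, this, smul_eq_mul, mul_one]
    have hrn := LinearMap.finrank_range_add_finrank_ker g
    have hrange1 : Module.finrank (ZMod 2) (LinearMap.range g) = 1 := by
      rw [LinearMap.range_eq_top.mpr hgsurj, finrank_top]
      exact Module.finrank_self _
    have hkermap : (LinearMap.ker g).map Csd.subtype = Csd ⊓ LinearMap.ker π := by
      have : LinearMap.ker g = (LinearMap.ker π).comap Csd.subtype := by
        rw [hg, LinearMap.ker_comp]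
      rw [this, Submodule.map_comap_subtype]
    have hdim2 : Module.finrank (ZMod 2) (dualCode (Csd.map (punctureMap n)))
        = Module.finrank (ZMod 2) (LinearMap.ker g) := by
      rw [hdualeq, ← hkermap, ← Submodule.map_comp]
      exact ((LinearMap.ker g).equivMapOfInjective f hfinj).finrank_eq.symm
    rw [hdim1, hdim2]
    omega
  · rintro _ ⟨v, hv, rfl⟩ hc0
    have hvne : v ≠ 0 := by
      rintro rfl
      exact hc0 (map_zero _)
    have h1 := hdist v hv hvne
    have h2 := hammingNorm_le_punctured v
    omega
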